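/- arXiv:quant-ph/0212109 — 2 statements merged into one kernel-verified Lean document; each statement's English description precedes it below -/
import Mathlib

section
/- Let γ ∈ [π/4, π/2], c ∈ (0, π/2], b = arccos((cos c − cos²γ)/sin²γ), p, q, U₁, U₂ as in the W-identity. Then U₁ · exp(−i(γ/2)σ_z) · exp((b+π)(i/2)σ_y) · exp(−i(γ/2)σ_z) · U₂ = exp(−i(c/2)σ_z). -/
set_option maxHeartbeats 1600000

open Matrix Kronecker

noncomputable section

def σx : Matrix (Fin 2) (Fin 2) ℂ := !![0, 1; 1, 0]
def σy : Matrix (Fin 2) (Fin 2) ℂ := !![0, -Complex.I; Complex.I, 0]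
def σz : Matrix (Fin 2) (Fin 2) ℂ := !![1, 0; 0, -1]

/-- matrix exponential over ℂ. -/
def mexp {n : Type*} [Fintype n] [DecidableEq n]
    (A : Matrix n n ℂ) : Matrix n n ℂ := NormedSpace.exp A

lemma exp_sz (z : ℂ) : mexp (z • σz) = !![Complex.exp z, 0; 0, Complex.exp (-z)] := by
  have h : z • σz = Matrix.diagonal ![z, -z] := by
    ext i j; fin_cases i <;> fin_cases j <;> simp [σz, Matrix.diagonal]
  rw [mexp, h, Matrix.exp_diagonal]
  ext i j
  fin_cases i <;> fin_cases j <;>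
    simp [Matrix.diagonal, Pi.exp_def, ← Complex.exp_eq_exp_ℂ]

lemma exp_sy (z : ℂ) : mexp (z • σy) =
    !![Complex.cosh z, -Complex.I * Complex.sinh z;
       Complex.I * Complex.sinh z, Complex.cosh z] := by
  set V : Matrix (Fin 2) (Fin 2) ℂ := !![1, 1; Complex.I, -Complex.I] with hV
  have hdet : IsUnit V := by
    apply (Matrix.isUnit_iff_isUnit_det _).mpr
    simp [hV, Matrix.det_fin_two]
    norm_num [Complex.ext_iff]
  have hinv : V⁻¹ = !![1/2, -Complex.I/2; 1/2, Complex.I/2] := by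
    apply Matrix.inv_eq_right_inv
    ext i j
    fin_cases i <;> fin_cases j <;>
      (simp [hV, Matrix.mul_apply, Fin.sum_univ_two, Matrix.one_apply];
       try ring_nf;
       try simp [Complex.ext_iff];
       try norm_num)
  have hconj : z • σy = V * (z • σz) * V⁻¹ := by
    rw [hinv]
    ext i j
    fin_cases i <;> fin_cases j <;>
      (simp [hV, σy, σz, Matrix.mul_apply, Fin.sum_univ_two];
       try ring_nf;
       try simp [Complex.ext_iff];
       try ring_nf)
  rw [mexp, hconj, Matrix.exp_conj V _ hdet, ← mexp, exp_sz, hinv]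
  have hc : Complex.exp z = Complex.cosh z + Complex.sinh z := (Complex.cosh_add_sinh z).symm
  have hs : Complex.exp (-z) = Complex.cosh z - Complex.sinh z := (Complex.cosh_sub_sinh z).symm
  ext i j
  fin_cases i <;> fin_cases j <;>
    (simp [hV, Matrix.mul_apply, Fin.sum_univ_two]; rw [hc, hs]; ring_nf; try simp [Complex.I_sq]; try ring)

lemma eq_of_sq {a b : ℝ} (ha : 0 ≤ a) (hb : 0 ≤ b) (h : a^2 = b^2) : a = b := by
  rw [← Real.sqrt_sq ha, ← Real.sqrt_sq hb, h]

lemma key_ids (γ c : ℝ) (hγ : γ ∈ Set.Icc (Real.pi / 4) (Real.pi / 2))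
    (hc : c ∈ Set.Ioc 0 (Real.pi / 2))
    (b p q : ℝ)
    (hb : b = Real.arccos ((Real.cos c - (Real.cos γ) ^ 2) / (Real.sin γ) ^ 2))
    (hp : p = Real.sqrt ((1 + Real.tan (c / 2) / Real.tan γ) / 2))
    (hq : q = Real.sqrt ((1 - Real.tan (c / 2) / Real.tan γ) / 2)) :
    p^2 + q^2 = 1 ∧
    Real.sin (b/2) * Real.sin γ = Real.sin (c/2) ∧
    (p^2 - q^2) * Real.cos γ * Real.sin (b/2) + 2*p*q*Real.cos (b/2) = Real.cos (c/2) ∧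
    2*p*q*Real.cos γ * Real.sin (b/2) = (p^2 - q^2) * Real.cos (b/2) := by
  obtain ⟨hγ1, hγ2⟩ := hγ
  obtain ⟨hc1, hc2⟩ := hc
  have hπ := Real.pi_pos
  set sγ := Real.sin γ with hsγ
  set cγ := Real.cos γ with hcγ
  set cc := Real.cos (c/2) with hcc
  set sc := Real.sin (c/2) with hsc
  set t := Real.tan (c/2) / Real.tan γ with ht
  set S := Real.sin (b/2) with hS
  set K := Real.cos (b/2) with hK
  have f1 : 0 < sγ := Real.sin_pos_of_pos_of_lt_pi (by linarith) (by linarith)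
  have f2 : 0 ≤ cγ := Real.cos_nonneg_of_mem_Icc ⟨by linarith, hγ2⟩
  have f3 : 0 < cc := Real.cos_pos_of_mem_Ioo ⟨by linarith, by linarith⟩
  have f4 : 0 < sc := Real.sin_pos_of_pos_of_lt_pi (by linarith) (by linarith)
  have f5 : sc ≤ cc := by
    rw [hsc, ← Real.cos_pi_div_two_sub]
    exact Real.cos_le_cos_of_nonneg_of_le_pi (by linarith) (by linarith) (by linarith)
  have f6 : cγ ≤ sγ := by
    rw [hsγ, ← Real.cos_pi_div_two_sub]
    exact Real.cos_le_cos_of_nonneg_of_le_pi (by linarith) (by linarith) (by linarith)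
  have f7 : cγ ≤ cc := by
    rw [hcγ, hcc]
    exact Real.cos_le_cos_of_nonneg_of_le_pi (by linarith) (by linarith) (by linarith)
  have pyγ : sγ^2 + cγ^2 = 1 := Real.sin_sq_add_cos_sq γ
  have pyc : sc^2 + cc^2 = 1 := Real.sin_sq_add_cos_sq (c/2)
  have hcosc1 : Real.cos c = 1 - 2*sc^2 := by
    have h := Real.sin_sq_eq_half_sub (c/2)
    rw [show 2*(c/2) = c by ring] at h; rw [← hsc] at h; linarith
  have hcosc2 : Real.cos c = 2*cc^2 - 1 := by
    have h := Real.cos_sq (c/2)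
    rw [show 2*(c/2) = c by ring] at h; rw [← hcc] at h; linarith
  have hT : t * (cc * sγ) = sc * cγ := by
    by_cases hcγ0 : cγ = 0
    · have htanγ : Real.tan γ = 0 := by
        rw [Real.tan_eq_sin_div_cos, ← hcγ, hcγ0, div_zero]
      rw [ht, htanγ, div_zero, hcγ0]; ring
    · rw [ht, Real.tan_eq_sin_div_cos, Real.tan_eq_sin_div_cos, ← hcγ, ← hsγ, ← hsc, ← hcc]
      field_simp
  have hccsγ : 0 < cc * sγ := mul_pos f3 f1
  have hteq : t = sc * cγ / (cc * sγ) := by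
    rw [eq_div_iff hccsγ.ne']; exact hT
  have ht0 : 0 ≤ t := by
    rw [hteq]; positivity
  have ht1 : t ≤ 1 := by
    rw [hteq, div_le_one hccsγ]
    exact mul_le_mul f5 f6 f2 f3.le
  have hp0 : 0 ≤ p := hp ▸ Real.sqrt_nonneg _
  have hq0 : 0 ≤ q := hq ▸ Real.sqrt_nonneg _
  have hp2 : p^2 = (1+t)/2 := by rw [hp, Real.sq_sqrt (by linarith)]
  have hq2 : q^2 = (1-t)/2 := by rw [hq, Real.sq_sqrt (by linarith)]
  have hPQ : p^2 + q^2 = 1 := by rw [hp2, hq2]; ring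
  have hPmQ : p^2 - q^2 = t := by rw [hp2, hq2]; ring
  -- cos b
  have hxle : (Real.cos c - cγ^2) / sγ^2 ≤ 1 := by
    rw [div_le_one (by positivity)]
    linarith [Real.cos_le_one c, pyγ]
  have hxge : -1 ≤ (Real.cos c - cγ^2) / sγ^2 := by
    rw [le_div_iff₀ (by positivity)]
    have : cγ^2 ≤ cc^2 := pow_le_pow_left₀ f2 f7 2
    linarith [hcosc2, pyγ]
  have hbb : Real.cos b = (Real.cos c - cγ^2) / sγ^2 := by
    rw [hb]; exact Real.cos_arccos hxge hxle
  have hcb : Real.cos b * sγ^2 = Real.cos c - cγ^2 := by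
    rw [hbb]; field_simp
  have hb0 : 0 ≤ b := hb ▸ Real.arccos_nonneg _
  have hbπ : b ≤ Real.pi := hb ▸ Real.arccos_le_pi _
  have hS0 : 0 ≤ S := Real.sin_nonneg_of_nonneg_of_le_pi (by linarith) (by linarith)
  have hK0 : 0 ≤ K := Real.cos_nonneg_of_mem_Icc ⟨by linarith, by linarith⟩
  have hS2 : S^2 = (1 - Real.cos b)/2 := by
    have h := Real.sin_sq_eq_half_sub (b/2)
    rw [show 2*(b/2) = b by ring] at h; rw [← hS] at h; linarith
  have hK2 : K^2 = (1 + Real.cos b)/2 := by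
    have h := Real.cos_sq (b/2)
    rw [show 2*(b/2) = b by ring] at h; rw [← hK] at h; linarith
  have d1 : S^2 * sγ^2 = sc^2 := by
    rw [hS2]; linarith [hcb, hcosc1, pyγ]
  have d2 : K^2 * sγ^2 = cc^2 - cγ^2 := by
    rw [hK2]; linarith [hcb, hcosc2, pyγ]
  have e2 : S * sγ = sc := by
    apply eq_of_sq (by positivity) f4.le
    calc (S*sγ)^2 = S^2 * sγ^2 := by ring
    _ = sc^2 := d1
  have e1 : 2*p*q*cc = K := by
    apply mul_right_cancel₀ (ne_of_gt f1)
    apply eq_of_sq (by positivity) (by positivity)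
    have expand : (2*p*q*cc*sγ)^2 = 4 * p^2 * q^2 * (cc^2 * sγ^2) := by ring
    rw [expand, hp2, hq2]
    have : (K*sγ)^2 = K^2*sγ^2 := by ring
    rw [this, d2]
    linear_combination (-(t*cc*sγ + sc*cγ))*hT + cc^2*pyγ - cγ^2*pyc
  have hB : (p^2 - q^2) * cγ * S + 2*p*q*K = cc := by
    apply mul_right_cancel₀ (show cc * sγ^2 ≠ 0 by positivity)
    linear_combination (cγ*S*cc*sγ^2)*hPmQ + (cγ*S*sγ)*hT + (sc*cγ^2)*e2 + (K*sγ^2)*e1 + d2 + cγ^2*pyc - cc^2*pyγ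
  have hC : 2*p*q*cγ*S = (p^2 - q^2) * K := by
    apply mul_right_cancel₀ (show cc * sγ ≠ 0 by positivity)
    linear_combination (cγ*S*sγ)*e1 + (K*cγ)*e2 - K*hT - (K*cc*sγ)*hPmQ
  exact ⟨hPQ, e2, hB, hC⟩


theorem stmt13 (γ c : ℝ) (hγ : γ ∈ Set.Icc (Real.pi / 4) (Real.pi / 2))
    (hc : c ∈ Set.Ioc 0 (Real.pi / 2))
    (b p q : ℝ)
    (hb : b = Real.arccos ((Real.cos c - (Real.cos γ) ^ 2) / (Real.sin γ) ^ 2))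
    (hp : p = Real.sqrt ((1 + Real.tan (c / 2) / Real.tan γ) / 2))
    (hq : q = Real.sqrt ((1 - Real.tan (c / 2) / Real.tan γ) / 2))
    (U₁ U₂ : Matrix (Fin 2) (Fin 2) ℂ)
    (hU₁ : U₁ = !![Complex.I * p, Complex.I * q; -q, p])
    (hU₂ : U₂ = !![Complex.I * p, -q; -Complex.I * q, -p]) :
    U₁ * mexp ((-Complex.I * ((γ : ℂ) / 2)) • σz) *
        mexp ((((b + Real.pi : ℝ) : ℂ) * (Complex.I / 2)) • σy) *
        mexp ((-Complex.I * ((γ : ℂ) / 2)) • σz) * U₂ =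
      mexp ((-Complex.I * ((c : ℂ) / 2)) • σz) := by
  obtain ⟨hPQ, idA, idB, idC⟩ := key_ids γ c hγ hc b p q hb hp hq
  have idG : Real.sin (γ/2)^2 + Real.cos (γ/2)^2 = 1 := Real.sin_sq_add_cos_sq _
  -- double angle rewrites
  have hg1 : Real.sin γ = 2 * Real.sin (γ/2) * Real.cos (γ/2) := by
    have h := Real.sin_two_mul (γ/2); rw [show 2*(γ/2) = γ by ring] at h; linarith
  have hg2 : Real.cos γ = Real.cos (γ/2)^2 - Real.sin (γ/2)^2 := by
    have h := Real.cos_two_mul (γ/2); rw [show 2*(γ/2) = γ by ring] at h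
    linarith [Real.sin_sq_add_cos_sq (γ/2)]
  rw [hg1] at idA
  rw [hg2] at idB idC
  -- scalar exponential values
  have hEγ : Complex.exp (-Complex.I * ((γ:ℂ)/2)) =
      (Real.cos (γ/2) : ℂ) - (Real.sin (γ/2) : ℂ) * Complex.I := by
    rw [show -Complex.I * ((γ:ℂ)/2) = ((-(γ/2) : ℝ) : ℂ) * Complex.I by push_cast; ring,
      Complex.exp_mul_I, ← Complex.ofReal_cos, ← Complex.ofReal_sin, Real.cos_neg, Real.sin_neg]
    push_cast; ring
  have hFγ : Complex.exp (-(-Complex.I * ((γ:ℂ)/2))) =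
      (Real.cos (γ/2) : ℂ) + (Real.sin (γ/2) : ℂ) * Complex.I := by
    rw [show -(-Complex.I * ((γ:ℂ)/2)) = (((γ/2) : ℝ) : ℂ) * Complex.I by push_cast; ring,
      Complex.exp_mul_I, ← Complex.ofReal_cos, ← Complex.ofReal_sin]
  have hEc : Complex.exp (-Complex.I * ((c:ℂ)/2)) =
      (Real.cos (c/2) : ℂ) - (Real.sin (c/2) : ℂ) * Complex.I := by
    rw [show -Complex.I * ((c:ℂ)/2) = ((-(c/2) : ℝ) : ℂ) * Complex.I by push_cast; ring,
      Complex.exp_mul_I, ← Complex.ofReal_cos, ← Complex.ofReal_sin, Real.cos_neg, Real.sin_neg]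
    push_cast; ring
  have hFc : Complex.exp (-(-Complex.I * ((c:ℂ)/2))) =
      (Real.cos (c/2) : ℂ) + (Real.sin (c/2) : ℂ) * Complex.I := by
    rw [show -(-Complex.I * ((c:ℂ)/2)) = (((c/2) : ℝ) : ℂ) * Complex.I by push_cast; ring,
      Complex.exp_mul_I, ← Complex.ofReal_cos, ← Complex.ofReal_sin]
  have hcoshb : Complex.cosh (((b + Real.pi : ℝ) : ℂ) * (Complex.I/2)) =
      -(Real.sin (b/2) : ℂ) := by
    rw [show ((b + Real.pi : ℝ) : ℂ) * (Complex.I/2) = (((b + Real.pi)/2 : ℝ) : ℂ) * Complex.I by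
        push_cast; ring,
      Complex.cosh_mul_I, ← Complex.ofReal_cos,
      show (b + Real.pi)/2 = b/2 + Real.pi/2 by ring, Real.cos_add_pi_div_two]
    push_cast; ring
  have hsinhb : Complex.sinh (((b + Real.pi : ℝ) : ℂ) * (Complex.I/2)) =
      (Real.cos (b/2) : ℂ) * Complex.I := by
    rw [show ((b + Real.pi : ℝ) : ℂ) * (Complex.I/2) = (((b + Real.pi)/2 : ℝ) : ℂ) * Complex.I by
        push_cast; ring,
      Complex.sinh_mul_I, ← Complex.ofReal_sin,
      show (b + Real.pi)/2 = b/2 + Real.pi/2 by ring, Real.sin_add_pi_div_two]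
  rw [hU₁, hU₂, exp_sz, exp_sy, exp_sz, hEγ, hFγ, hEc, hFc, hcoshb, hsinhb]
  ext i j
  fin_cases i <;> fin_cases j <;>
    simp only [Fin.mk_zero, Fin.mk_one, Matrix.mul_apply, Fin.sum_univ_two, Matrix.cons_val',
      Matrix.cons_val_zero, Matrix.cons_val_one, Matrix.head_cons, Matrix.head_fin_const,
      Matrix.empty_val', Matrix.cons_val_fin_one, Matrix.of_apply]
  · simp only [Complex.ext_iff, Complex.add_re, Complex.add_im, Complex.mul_re, Complex.mul_im,
        Complex.sub_re, Complex.sub_im, Complex.neg_re, Complex.neg_im, Complex.I_re,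
        Complex.I_im, Complex.ofReal_re, Complex.ofReal_im, Complex.zero_re, Complex.zero_im,
        mul_zero, zero_mul, mul_one, one_mul, sub_zero, zero_sub, add_zero, zero_add, neg_zero,
        neg_neg]
    refine ⟨?_, ?_⟩
    · linear_combination idB + 2*p*q*Real.cos (b/2)*idG
    · linear_combination (-(Real.sin (b/2)*2*Real.sin (γ/2)*Real.cos (γ/2)))*hPQ - idA
  · simp only [Complex.ext_iff, Complex.add_re, Complex.add_im, Complex.mul_re, Complex.mul_im,
        Complex.sub_re, Complex.sub_im, Complex.neg_re, Complex.neg_im, Complex.I_re,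
        Complex.I_im, Complex.ofReal_re, Complex.ofReal_im, Complex.zero_re, Complex.zero_im,
        mul_zero, zero_mul, mul_one, one_mul, sub_zero, zero_sub, add_zero, zero_add, neg_zero,
        neg_neg]
    refine ⟨?_, ?_⟩
    · ring
    · linear_combination idC - (p^2-q^2)*Real.cos (b/2)*idG
  · simp only [Complex.ext_iff, Complex.add_re, Complex.add_im, Complex.mul_re, Complex.mul_im,
        Complex.sub_re, Complex.sub_im, Complex.neg_re, Complex.neg_im, Complex.I_re,
        Complex.I_im, Complex.ofReal_re, Complex.ofReal_im, Complex.zero_re, Complex.zero_im,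
        mul_zero, zero_mul, mul_one, one_mul, sub_zero, zero_sub, add_zero, zero_add, neg_zero,
        neg_neg]
    refine ⟨?_, ?_⟩
    · ring
    · linear_combination idC - (p^2-q^2)*Real.cos (b/2)*idG
  · simp only [Complex.ext_iff, Complex.add_re, Complex.add_im, Complex.mul_re, Complex.mul_im,
        Complex.sub_re, Complex.sub_im, Complex.neg_re, Complex.neg_im, Complex.I_re,
        Complex.I_im, Complex.ofReal_re, Complex.ofReal_im, Complex.zero_re, Complex.zero_im,
        mul_zero, zero_mul, mul_one, one_mul, sub_zero, zero_sub, add_zero, zero_add, neg_zero,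
        neg_neg]
    refine ⟨?_, ?_⟩
    · linear_combination idB + 2*p*q*Real.cos (b/2)*idG
    · linear_combination (Real.sin (b/2)*2*Real.sin (γ/2)*Real.cos (γ/2))*hPQ + idA
end
end

section
/- Let γ > 0 and let n̂ = (n_x, n_y, n_z) be a unit vector in ℝ³ with n_z ≠ ±1, and let U = exp(iγ(n_x σ_x + n_y σ_y + n_z σ_z)). Define U₁ = [[i√((1−n_z)/2), √((1+n_z)/2)], [(n_y−i n_x)/√(2(1−n_z)), (n_x+i n_y)/√(2(1+n_z))]]. Then the Controlled-U gate (block-diag(I, U)) equals (I⊗U₁) · exp(γ(i/2)σ_z⊗σ_z) · (I⊗(exp(−γ(i/2)σ_z)·U₁†)). -/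
open Matrix Kronecker

noncomputable section

set_option maxHeartbeats 1600000

lemma mexp_diagonal {n : Type*} [Fintype n] [DecidableEq n] (v : n → ℂ) :
    mexp (Matrix.diagonal v) = Matrix.diagonal (fun i => Complex.exp (v i)) := by
  rw [mexp, Matrix.exp_diagonal]
  rw [Pi.exp_def]
  ext i
  rw [Complex.exp_eq_exp_ℂ]

lemma mexp_smul_σz (c : ℂ) :
    mexp (c • σz) = !![Complex.exp c, 0; 0, Complex.exp (-c)] := by
  have h : c • σz = Matrix.diagonal ![c, -c] := by
    ext i j
    fin_cases i <;> fin_cases j <;> simp [σz, Matrix.diagonal]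
  rw [h, mexp_diagonal]
  ext i j
  fin_cases i <;> fin_cases j <;> simp [Matrix.diagonal]

lemma mexp_smul_zz (c : ℂ) : mexp (c • (σz ⊗ₖ σz)) =
    (!![1,0;0,0] : Matrix (Fin 2) (Fin 2) ℂ) ⊗ₖ !![Complex.exp c, 0; 0, Complex.exp (-c)]
    + (!![0,0;0,1] : Matrix (Fin 2) (Fin 2) ℂ) ⊗ₖ !![Complex.exp (-c), 0; 0, Complex.exp c] := by
  have h : c • (σz ⊗ₖ σz) =
      Matrix.diagonal (fun p : Fin 2 × Fin 2 => if p.1 = p.2 then c else -c) := by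
    ext ⟨i, j⟩ ⟨k, l⟩
    fin_cases i <;> fin_cases j <;> fin_cases k <;> fin_cases l <;>
      simp [σz, Matrix.diagonal, Matrix.kroneckerMap_apply] <;> simp [Prod.ext_iff]
  rw [h, mexp_diagonal]
  ext ⟨i, j⟩ ⟨k, l⟩
  fin_cases i <;> fin_cases j <;> fin_cases k <;> fin_cases l <;>
    simp [Matrix.diagonal, Matrix.kroneckerMap_apply] <;> simp [Prod.ext_iff]

theorem stmt16 (γ nx ny nz : ℝ) (hγ : 0 < γ)
    (hn : nx ^ 2 + ny ^ 2 + nz ^ 2 = 1) (h1 : nz ≠ 1) (h2 : nz ≠ -1)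
    (U : Matrix (Fin 2) (Fin 2) ℂ)
    (hU : U = mexp ((Complex.I * (γ : ℂ)) • ((nx : ℂ) • σx + (ny : ℂ) • σy + (nz : ℂ) • σz)))
    (U₁ : Matrix (Fin 2) (Fin 2) ℂ)
    (hU₁ : U₁ = !![Complex.I * Real.sqrt ((1 - nz) / 2), (Real.sqrt ((1 + nz) / 2) : ℂ);
      ((ny : ℂ) - Complex.I * nx) / (Real.sqrt (2 * (1 - nz)) : ℂ),
      ((nx : ℂ) + Complex.I * ny) / (Real.sqrt (2 * (1 + nz)) : ℂ)])
    (CU : Matrix (Fin 2 × Fin 2) (Fin 2 × Fin 2) ℂ)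
    (hCU : CU = (!![1, 0; 0, 0] : Matrix (Fin 2) (Fin 2) ℂ) ⊗ₖ (1 : Matrix (Fin 2) (Fin 2) ℂ) +
      (!![0, 0; 0, 1] : Matrix (Fin 2) (Fin 2) ℂ) ⊗ₖ U) :
    CU = ((1 : Matrix (Fin 2) (Fin 2) ℂ) ⊗ₖ U₁) *
        mexp (((γ : ℂ) * (Complex.I / 2)) • (σz ⊗ₖ σz)) *
        ((1 : Matrix (Fin 2) (Fin 2) ℂ) ⊗ₖ
          (mexp ((-(γ : ℂ) * (Complex.I / 2)) • σz) * U₁ᴴ)) := by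
  -- basic inequalities
  have hle : nz ≤ 1 := by nlinarith [sq_nonneg nx, sq_nonneg ny]
  have hge : -1 ≤ nz := by nlinarith [sq_nonneg nx, sq_nonneg ny]
  have hm : 0 < 1 - nz := by
    rcases lt_or_eq_of_le hle with h | h
    · linarith
    · exact absurd h h1
  have hp : 0 < 1 + nz := by
    rcases lt_or_eq_of_le hge with h | h
    · linarith
    · exact absurd h.symm h2
  set ar := Real.sqrt ((1 - nz) / 2) with har_def
  set br := Real.sqrt ((1 + nz) / 2) with hbr_def
  have har2 : ar ^ 2 = (1 - nz) / 2 := Real.sq_sqrt (by linarith)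
  have hbr2 : br ^ 2 = (1 + nz) / 2 := Real.sq_sqrt (by linarith)
  have har0 : 0 < ar := Real.sqrt_pos.mpr (by linarith)
  have hbr0 : 0 < br := Real.sqrt_pos.mpr (by linarith)
  have hs1 : Real.sqrt (2 * (1 - nz)) = 2 * ar := by
    rw [show 2 * (1 - nz) = (2 * ar) ^ 2 by rw [mul_pow, har2]; ring,
      Real.sqrt_sq (by positivity)]
  have hs2 : Real.sqrt (2 * (1 + nz)) = 2 * br := by
    rw [show 2 * (1 + nz) = (2 * br) ^ 2 by rw [mul_pow, hbr2]; ring,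
      Real.sqrt_sq (by positivity)]
  rw [hs1, hs2] at hU₁
  have hα2 : (ar : ℂ) ^ 2 = (1 - (nz : ℂ)) / 2 := by
    rw [← Complex.ofReal_pow, har2]; push_cast; ring
  have hβ2 : (br : ℂ) ^ 2 = (1 + (nz : ℂ)) / 2 := by
    rw [← Complex.ofReal_pow, hbr2]; push_cast; ring
  have hα0 : (ar : ℂ) ≠ 0 := by exact_mod_cast har0.ne'
  have hβ0 : (br : ℂ) ≠ 0 := by exact_mod_cast hbr0.ne'
  have hnn : (nx : ℂ) ^ 2 + (ny : ℂ) ^ 2 = 4 * (ar : ℂ) ^ 2 * (br : ℂ) ^ 2 := by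
    rw [hα2, hβ2]
    have h : (nx : ℂ) ^ 2 + (ny : ℂ) ^ 2 + (nz : ℂ) ^ 2 = 1 := by exact_mod_cast hn
    linear_combination h
  have hU₁' : U₁ = !![Complex.I * (ar : ℂ), (br : ℂ);
      ((ny : ℂ) - Complex.I * nx) / (2 * (ar : ℂ)),
      ((nx : ℂ) + Complex.I * ny) / (2 * (br : ℂ))] := by
    rw [hU₁]; push_cast; rfl
  have hAdj : U₁ᴴ = !![-(Complex.I) * (ar : ℂ), ((ny : ℂ) + Complex.I * nx) / (2 * (ar : ℂ));
      (br : ℂ), ((nx : ℂ) - Complex.I * ny) / (2 * (br : ℂ))] := by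
    rw [hU₁']
    ext i j
    fin_cases i <;> fin_cases j <;>
      simp [Matrix.conjTranspose_apply, map_div₀, Complex.conj_ofReal] <;> ring
  -- unitarity
  have hUnit : U₁ * U₁ᴴ = 1 := by
    ext i j
    fin_cases i <;> fin_cases j <;>
      simp only [hU₁', Matrix.mul_apply, Fin.sum_univ_two, Matrix.conjTranspose_apply,
        Matrix.cons_val', Matrix.cons_val_zero, Matrix.cons_val_one, Matrix.head_cons,
        Matrix.head_fin_const, Matrix.empty_val', Matrix.cons_val_fin_one,
        map_div₀, _root_.map_mul, map_sub, map_add, map_ofNat, Complex.conj_ofReal,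
        Complex.conj_I, Matrix.one_apply] <;>
      norm_num <;> (try field_simp) <;> ring_nf <;>
        (try (simp only [Complex.I_sq]; ring_nf))
    all_goals first
    | linear_combination hα2 + hβ2
    | linear_combination Complex.I * hnn
    | linear_combination -Complex.I * hnn
    | linear_combination hnn + 4*(ar:ℂ)^2*(hα2+hβ2)
    | linear_combination hnn + 4*(br:ℂ)^2*(hα2+hβ2)
    | linear_combination 4*((ar:ℂ)^2+(br:ℂ)^2)*hnn + 16*(ar:ℂ)^2*(br:ℂ)^2*(hα2+hβ2)
    | linear_combination ((ar:ℂ)^2+(br:ℂ)^2)*hnn + 4*(ar:ℂ)^2*(br:ℂ)^2*(hα2+hβ2)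
  have hUnit' : U₁ᴴ * U₁ = 1 := by
    ext i j
    fin_cases i <;> fin_cases j <;>
      simp only [hU₁', Matrix.mul_apply, Fin.sum_univ_two, Matrix.conjTranspose_apply,
        Matrix.cons_val', Matrix.cons_val_zero, Matrix.cons_val_one, Matrix.head_cons,
        Matrix.head_fin_const, Matrix.empty_val', Matrix.cons_val_fin_one,
        map_div₀, _root_.map_mul, map_sub, map_add, map_ofNat, Complex.conj_ofReal,
        Complex.conj_I, Matrix.one_apply] <;>
      norm_num <;> (try field_simp) <;> ring_nf <;>
        (try (simp only [Complex.I_sq]; ring_nf))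
    all_goals first
    | linear_combination hα2 + hβ2
    | linear_combination Complex.I * hnn
    | linear_combination -Complex.I * hnn
    | linear_combination hnn + 4*(ar:ℂ)^2*(hα2+hβ2)
    | linear_combination hnn + 4*(br:ℂ)^2*(hα2+hβ2)
    | linear_combination 4*((ar:ℂ)^2+(br:ℂ)^2)*hnn + 16*(ar:ℂ)^2*(br:ℂ)^2*(hα2+hβ2)
  -- eigendecomposition of the Hamiltonian
  have hconj : ((nx : ℂ) • σx + (ny : ℂ) • σy + (nz : ℂ) • σz) =
      U₁ * (!![(-1:ℂ),0;0,1]) * U₁ᴴ := by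
    have hL : (nx : ℂ) • σx + (ny : ℂ) • σy + (nz : ℂ) • σz =
        !![(nz : ℂ), (nx : ℂ) - Complex.I * ny; (nx : ℂ) + Complex.I * ny, -(nz : ℂ)] := by
      ext i j
      fin_cases i <;> fin_cases j <;> simp [σx, σy, σz] <;> ring
    rw [hL, hAdj, hU₁', Matrix.mul_fin_two, Matrix.mul_fin_two]
    ext i j
    fin_cases i <;> fin_cases j <;>
      simp only [Matrix.cons_val', Matrix.cons_val_zero, Matrix.cons_val_one, Matrix.head_cons,
        Matrix.head_fin_const, Matrix.empty_val', Matrix.cons_val_fin_one, Matrix.of_apply,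
        Fin.zero_eta, Fin.mk_one] <;>
      (try field_simp) <;> ring_nf <;> (try (simp only [Complex.I_sq]; ring_nf))
    all_goals first
    | linear_combination hα2 - hβ2
    | linear_combination (-4*((ar:ℂ)^2-(br:ℂ)^2))*hnn + 16*(ar:ℂ)^2*(br:ℂ)^2*(hβ2-hα2)
    | linear_combination (4*((ar:ℂ)^2-(br:ℂ)^2))*hnn + 16*(ar:ℂ)^2*(br:ℂ)^2*(hα2-hβ2)
    | linear_combination (-((ar:ℂ)^2-(br:ℂ)^2))*hnn - 4*(ar:ℂ)^2*(br:ℂ)^2*(hα2-hβ2)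
  -- explicit form of U
  have hUeq : U = U₁ * !![Complex.exp (-(Complex.I * γ)), 0; 0, Complex.exp (Complex.I * γ)]
      * U₁ᴴ := by
    have hsm : (Complex.I * (γ : ℂ)) • ((nx : ℂ) • σx + (ny : ℂ) • σy + (nz : ℂ) • σz) =
        U₁ * Matrix.diagonal ![-(Complex.I * γ), Complex.I * γ] * U₁ᴴ := by
      rw [hconj]
      have hd : Matrix.diagonal ![-(Complex.I * γ), Complex.I * γ] =
          (Complex.I * (γ : ℂ)) • (!![(-1:ℂ),0;0,1]) := by
        ext i j
        fin_cases i <;> fin_cases j <;> simp [Matrix.diagonal]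
      rw [hd, Matrix.mul_smul, Matrix.smul_mul]
    rw [hU, hsm]
    have u : (Matrix (Fin 2) (Fin 2) ℂ)ˣ := ⟨U₁, U₁ᴴ, hUnit, hUnit'⟩
    have hc := Matrix.exp_units_conj
      (⟨U₁, U₁ᴴ, hUnit, hUnit'⟩ : (Matrix (Fin 2) (Fin 2) ℂ)ˣ)
      (Matrix.diagonal ![-(Complex.I * γ), Complex.I * γ])
    rw [mexp]
    rw [show ((⟨U₁, U₁ᴴ, hUnit, hUnit'⟩ : (Matrix (Fin 2) (Fin 2) ℂ)ˣ) : Matrix (Fin 2) (Fin 2) ℂ)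
      = U₁ from rfl] at hc
    rw [show (((⟨U₁, U₁ᴴ, hUnit, hUnit'⟩ : (Matrix (Fin 2) (Fin 2) ℂ)ˣ)⁻¹ : (Matrix (Fin 2) (Fin 2) ℂ)ˣ) : Matrix (Fin 2) (Fin 2) ℂ)
      = U₁ᴴ from rfl] at hc
    rw [hc, ← mexp, mexp_diagonal]
    congr 1
    congr 1
    ext i j
    fin_cases i <;> fin_cases j <;> simp [Matrix.diagonal]
  -- the two diagonal exponentials
  have hzz : mexp (((γ : ℂ) * (Complex.I / 2)) • (σz ⊗ₖ σz)) =
      (!![1,0;0,0] : Matrix (Fin 2) (Fin 2) ℂ) ⊗ₖ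
        !![Complex.exp ((γ : ℂ) * (Complex.I / 2)), 0; 0, Complex.exp (-((γ : ℂ) * (Complex.I / 2)))]
      + (!![0,0;0,1] : Matrix (Fin 2) (Fin 2) ℂ) ⊗ₖ
        !![Complex.exp (-((γ : ℂ) * (Complex.I / 2))), 0; 0, Complex.exp ((γ : ℂ) * (Complex.I / 2))] :=
    mexp_smul_zz _
  have hz : mexp ((-(γ : ℂ) * (Complex.I / 2)) • σz) =
      !![Complex.exp (-((γ : ℂ) * (Complex.I / 2))), 0; 0,
        Complex.exp ((γ : ℂ) * (Complex.I / 2))] := by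
    rw [show (-(γ : ℂ) * (Complex.I / 2)) = -((γ : ℂ) * (Complex.I / 2)) by ring,
      mexp_smul_σz, neg_neg]
  -- exponential cancellation facts
  have he1 : Complex.exp ((γ : ℂ) * (Complex.I / 2)) *
      Complex.exp (-((γ : ℂ) * (Complex.I / 2))) = 1 := by
    rw [← Complex.exp_add]; simp
  have he2 : Complex.exp (-((γ : ℂ) * (Complex.I / 2))) *
      Complex.exp (-((γ : ℂ) * (Complex.I / 2))) = Complex.exp (-(Complex.I * γ)) := by
    rw [← Complex.exp_add]; congr 1; ring
  have he3 : Complex.exp ((γ : ℂ) * (Complex.I / 2)) *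
      Complex.exp ((γ : ℂ) * (Complex.I / 2)) = Complex.exp (Complex.I * γ) := by
    rw [← Complex.exp_add]; congr 1; ring
  -- auxiliary diagonal products
  have hDpF : (!![Complex.exp ((γ : ℂ) * (Complex.I / 2)), 0; 0,
        Complex.exp (-((γ : ℂ) * (Complex.I / 2)))] : Matrix (Fin 2) (Fin 2) ℂ) *
      !![Complex.exp (-((γ : ℂ) * (Complex.I / 2))), 0; 0,
        Complex.exp ((γ : ℂ) * (Complex.I / 2))] = 1 := by
    ext i j
    fin_cases i <;> fin_cases j <;>
      simp [Matrix.mul_apply, Fin.sum_univ_two, Matrix.one_apply, ← Complex.exp_add]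
  have hDmF : (!![Complex.exp (-((γ : ℂ) * (Complex.I / 2))), 0; 0,
        Complex.exp ((γ : ℂ) * (Complex.I / 2))] : Matrix (Fin 2) (Fin 2) ℂ) *
      !![Complex.exp (-((γ : ℂ) * (Complex.I / 2))), 0; 0,
        Complex.exp ((γ : ℂ) * (Complex.I / 2))] =
      !![Complex.exp (-(Complex.I * γ)), 0; 0, Complex.exp (Complex.I * γ)] := by
    ext i j
    fin_cases i <;> fin_cases j <;>
      simp [Matrix.mul_apply, Fin.sum_univ_two, ← Complex.exp_add] <;>
      (congr 1; ring)
  have key1 : U₁ * !![Complex.exp ((γ : ℂ) * (Complex.I / 2)), 0; 0,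
        Complex.exp (-((γ : ℂ) * (Complex.I / 2)))] *
      (!![Complex.exp (-((γ : ℂ) * (Complex.I / 2))), 0; 0,
        Complex.exp ((γ : ℂ) * (Complex.I / 2))] * U₁ᴴ) = 1 := by
    rw [Matrix.mul_assoc U₁, ← Matrix.mul_assoc
      (!![Complex.exp ((γ : ℂ) * (Complex.I / 2)), 0; 0,
        Complex.exp (-((γ : ℂ) * (Complex.I / 2)))]), hDpF, Matrix.one_mul, hUnit]
  have key2 : U₁ * !![Complex.exp (-((γ : ℂ) * (Complex.I / 2))), 0; 0,
        Complex.exp ((γ : ℂ) * (Complex.I / 2))] *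
      (!![Complex.exp (-((γ : ℂ) * (Complex.I / 2))), 0; 0,
        Complex.exp ((γ : ℂ) * (Complex.I / 2))] * U₁ᴴ) = U := by
    rw [Matrix.mul_assoc U₁, ← Matrix.mul_assoc
      (!![Complex.exp (-((γ : ℂ) * (Complex.I / 2))), 0; 0,
        Complex.exp ((γ : ℂ) * (Complex.I / 2))]), hDmF, hUeq, Matrix.mul_assoc]
  -- assemble
  rw [hzz, hz, hCU]
  rw [Matrix.mul_add, Matrix.add_mul]
  rw [← Matrix.mul_kronecker_mul, ← Matrix.mul_kronecker_mul, ← Matrix.mul_kronecker_mul,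
    ← Matrix.mul_kronecker_mul]
  simp only [Matrix.one_mul, Matrix.mul_one]
  rw [key1, key2]
end
end
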